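/- Let G_C be the 6-cycle on vertices 0,...,5 (edges i–(i+1 mod 6)) with additional chords (1,5) and (2,4), and let G_D be the 6-cycle with additional chords (1,4) and (2,5). Then Div(G_C) = Div(G_D) = 2/(1 + 2·exp(-1) + 2·exp(-2) + exp(-3)) + 4/(1 + 3·exp(-1) + 2·exp(-2)). -/

import Mathlib

/-- `exp(-d)` for an extended natural number distance, with `exp(-∞) = 0`. -/
noncomputable def expNeg (d : ℕ∞) : ℝ :=
  if d = ⊤ then 0 else Real.exp (-(WithTop.untopD 0 d : ℕ))

/-- The spread (structural diversity) of a finite graph with respect to its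
extended shortest-path metric. -/
noncomputable def spread {V : Type*} [Fintype V] (G : SimpleGraph V) : ℝ :=
  ∑ x, 1 / ∑ y, expNeg (G.edist x y)

/-- The 6-cycle with chords `(1,5)` and `(2,4)`. -/
def graphC : SimpleGraph (Fin 6) :=
  SimpleGraph.fromEdgeSet
    {s(0, 1), s(1, 2), s(2, 3), s(3, 4), s(4, 5), s(5, 0), s(1, 5), s(2, 4)}

/-- The 6-cycle with chords `(1,4)` and `(2,5)`. -/
def graphD : SimpleGraph (Fin 6) :=
  SimpleGraph.fromEdgeSet
    {s(0, 1), s(1, 2), s(2, 3), s(3, 4), s(4, 5), s(5, 0), s(1, 4), s(2, 5)}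

open SimpleGraph

section Helpers

lemma edist_eq_two' {V : Type*} {G : SimpleGraph V} {x y : V} (hne : x ≠ y)
    (hn : ¬ G.Adj x y) (h : ∃ z, G.Adj x z ∧ G.Adj z y) : G.edist x y = 2 := by
  obtain ⟨z, h1, h2⟩ := h
  refine le_antisymm ?_ ?_
  · calc G.edist x y ≤ G.edist x z + G.edist z y := G.edist_triangle
      _ = 1 + 1 := by rw [edist_eq_one_iff_adj.mpr h1, edist_eq_one_iff_adj.mpr h2]
      _ = 2 := by norm_num
  · have h0 : 1 ≤ G.edist x y := Order.one_le_iff_pos.mpr (G.edist_pos_of_ne hne)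
    have h1' : G.edist x y ≠ 1 := fun hc => hn (edist_eq_one_iff_adj.mp hc)
    have hlt : (1 : ℕ∞) < G.edist x y := lt_of_le_of_ne h0 (Ne.symm h1')
    calc (2:ℕ∞) = 1 + 1 := by norm_num
      _ ≤ G.edist x y := Order.add_one_le_of_lt hlt

lemma walk_bound {V : Type*} {G : SimpleGraph V} (f : V → ℤ)
    (hf : ∀ a b, G.Adj a b → (f a - f b).natAbs ≤ 1) :
    ∀ {x y : V} (p : G.Walk x y), (f x - f y).natAbs ≤ p.length := by
  intro x y p
  induction p with
  | nil => simp
  | @cons u w v h q ih =>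
    have : f u - f v = (f u - f w) + (f w - f v) := by ring
    rw [SimpleGraph.Walk.length_cons, this]
    calc ((f u - f w) + (f w - f v)).natAbs
        ≤ (f u - f w).natAbs + (f w - f v).natAbs := Int.natAbs_add_le _ _
      _ ≤ 1 + q.length := add_le_add (hf _ _ h) ih
      _ = q.length + 1 := by omega

lemma le_edist_of_lip {V : Type*} {G : SimpleGraph V} (f : V → ℤ)
    (hf : ∀ a b, G.Adj a b → (f a - f b).natAbs ≤ 1) (x y : V) :
    ((f x - f y).natAbs : ℕ∞) ≤ G.edist x y := by
  rcases eq_or_ne (G.edist x y) ⊤ with h | h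
  · simp [h]
  · obtain ⟨p, hp⟩ := G.exists_walk_of_edist_ne_top h
    rw [← hp]
    exact_mod_cast walk_bound f hf p

lemma expNeg_coe (n : ℕ) : expNeg n = Real.exp (-(n:ℝ)) := by
  rw [expNeg, if_neg (by simp)]
  rw [show WithTop.untopD 0 (n:ℕ∞) = ENat.toNat n from rfl, ENat.toNat_coe]

lemma expNeg0 : expNeg 0 = 1 := by simpa using expNeg_coe 0
lemma expNeg1 : expNeg 1 = Real.exp (-1) := by simpa using expNeg_coe 1
lemma expNeg2 : expNeg 2 = Real.exp (-2) := by
  have := expNeg_coe 2; norm_num at this ⊢; exact_mod_cast this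
lemma expNeg3 : expNeg 3 = Real.exp (-3) := by
  have := expNeg_coe 3; norm_num at this ⊢; exact_mod_cast this

end Helpers

section GraphC

def AC (x y : Fin 6) : Prop :=
  ((x = 0 ∧ y = 1 ∨ x = 1 ∧ y = 0) ∨
        (x = 1 ∧ y = 2 ∨ x = 2 ∧ y = 1) ∨
          (x = 2 ∧ y = 3 ∨ x = 3 ∧ y = 2) ∨
            (x = 3 ∧ y = 4 ∨ x = 4 ∧ y = 3) ∨
              (x = 4 ∧ y = 5 ∨ x = 5 ∧ y = 4) ∨
                (x = 5 ∧ y = 0 ∨ x = 0 ∧ y = 5) ∨ (x = 1 ∧ y = 5 ∨ x = 5 ∧ y = 1) ∨ x = 2 ∧ y = 4 ∨ x = 4 ∧ y = 2) ∧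
      x ≠ y

instance (x y : Fin 6) : Decidable (AC x y) := by unfold AC; infer_instance

lemma adjC_iff (x y : Fin 6) : graphC.Adj x y ↔ AC x y := by
  simp only [graphC, SimpleGraph.fromEdgeSet_adj, Set.mem_insert_iff, Set.mem_singleton_iff,
    Sym2.eq_iff, AC]

def dC : Fin 6 → Fin 6 → ℕ∞ :=
  ![![0,1,2,3,2,1],![1,0,1,2,2,1],![2,1,0,1,1,2],![3,2,1,0,1,2],![2,2,1,1,0,1],![1,1,2,2,1,0]]

@[simp] lemma dC_00 : dC 0 0 = 0 := by decide
@[simp] lemma dC_01 : dC 0 1 = 1 := by decide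
@[simp] lemma dC_02 : dC 0 2 = 2 := by decide
@[simp] lemma dC_03 : dC 0 3 = 3 := by decide
@[simp] lemma dC_04 : dC 0 4 = 2 := by decide
@[simp] lemma dC_05 : dC 0 5 = 1 := by decide
@[simp] lemma dC_10 : dC 1 0 = 1 := by decide
@[simp] lemma dC_11 : dC 1 1 = 0 := by decide
@[simp] lemma dC_12 : dC 1 2 = 1 := by decide
@[simp] lemma dC_13 : dC 1 3 = 2 := by decide
@[simp] lemma dC_14 : dC 1 4 = 2 := by decide
@[simp] lemma dC_15 : dC 1 5 = 1 := by decide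
@[simp] lemma dC_20 : dC 2 0 = 2 := by decide
@[simp] lemma dC_21 : dC 2 1 = 1 := by decide
@[simp] lemma dC_22 : dC 2 2 = 0 := by decide
@[simp] lemma dC_23 : dC 2 3 = 1 := by decide
@[simp] lemma dC_24 : dC 2 4 = 1 := by decide
@[simp] lemma dC_25 : dC 2 5 = 2 := by decide
@[simp] lemma dC_30 : dC 3 0 = 3 := by decide
@[simp] lemma dC_31 : dC 3 1 = 2 := by decide
@[simp] lemma dC_32 : dC 3 2 = 1 := by decide
@[simp] lemma dC_33 : dC 3 3 = 0 := by decide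
@[simp] lemma dC_34 : dC 3 4 = 1 := by decide
@[simp] lemma dC_35 : dC 3 5 = 2 := by decide
@[simp] lemma dC_40 : dC 4 0 = 2 := by decide
@[simp] lemma dC_41 : dC 4 1 = 2 := by decide
@[simp] lemma dC_42 : dC 4 2 = 1 := by decide
@[simp] lemma dC_43 : dC 4 3 = 1 := by decide
@[simp] lemma dC_44 : dC 4 4 = 0 := by decide
@[simp] lemma dC_45 : dC 4 5 = 1 := by decide
@[simp] lemma dC_50 : dC 5 0 = 1 := by decide
@[simp] lemma dC_51 : dC 5 1 = 1 := by decide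
@[simp] lemma dC_52 : dC 5 2 = 2 := by decide
@[simp] lemma dC_53 : dC 5 3 = 2 := by decide
@[simp] lemma dC_54 : dC 5 4 = 1 := by decide
@[simp] lemma dC_55 : dC 5 5 = 0 := by decide

lemma edistC03 : graphC.edist 0 3 = 3 := by
  have fh : ∀ a b : Fin 6, AC a b → ((![0,1,2,3,2,1] : Fin 6 → ℤ) a - ![0,1,2,3,2,1] b).natAbs ≤ 1 := by decide
  refine le_antisymm ?_ ?_
  · have h01 : graphC.Adj 0 1 := (adjC_iff 0 1).mpr (by decide)
    have h12 : graphC.Adj 1 2 := (adjC_iff 1 2).mpr (by decide)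
    have h23 : graphC.Adj 2 3 := (adjC_iff 2 3).mpr (by decide)
    have := graphC.edist_le (SimpleGraph.Walk.cons h01 (SimpleGraph.Walk.cons h12 h23.toWalk))
    simpa using this
  · have := le_edist_of_lip (G := graphC) ![0,1,2,3,2,1]
      (fun a b hab => fh a b ((adjC_iff a b).mp hab)) 0 3
    simpa using this

lemma tableC : ∀ x y, graphC.edist x y = dC x y := by
  intro x y
  fin_cases x <;> fin_cases y <;>
    first
      | exact graphC.edist_self
      | exact edist_eq_one_iff_adj.mpr ((adjC_iff _ _).mpr (by decide))
      | exact edist_eq_two' (by decide) (fun h => by exact absurd ((adjC_iff _ _).mp h) (by decide))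
          (by refine ?_ ; simp only [adjC_iff]; decide)
      | exact edistC03
      | exact (graphC.edist_comm .. ▸ edistC03 : _)

end GraphC

section GraphD

def AD (x y : Fin 6) : Prop :=
  ((x = 0 ∧ y = 1 ∨ x = 1 ∧ y = 0) ∨
        (x = 1 ∧ y = 2 ∨ x = 2 ∧ y = 1) ∨
          (x = 2 ∧ y = 3 ∨ x = 3 ∧ y = 2) ∨
            (x = 3 ∧ y = 4 ∨ x = 4 ∧ y = 3) ∨
              (x = 4 ∧ y = 5 ∨ x = 5 ∧ y = 4) ∨
                (x = 5 ∧ y = 0 ∨ x = 0 ∧ y = 5) ∨ (x = 1 ∧ y = 4 ∨ x = 4 ∧ y = 1) ∨ x = 2 ∧ y = 5 ∨ x = 5 ∧ y = 2) ∧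
      x ≠ y

instance (x y : Fin 6) : Decidable (AD x y) := by unfold AD; infer_instance

lemma adjD_iff (x y : Fin 6) : graphD.Adj x y ↔ AD x y := by
  simp only [graphD, SimpleGraph.fromEdgeSet_adj, Set.mem_insert_iff, Set.mem_singleton_iff,
    Sym2.eq_iff, AD]

def dD : Fin 6 → Fin 6 → ℕ∞ :=
  ![![0,1,2,3,2,1],![1,0,1,2,1,2],![2,1,0,1,2,1],![3,2,1,0,1,2],![2,1,2,1,0,1],![1,2,1,2,1,0]]

@[simp] lemma dD_00 : dD 0 0 = 0 := by decide
@[simp] lemma dD_01 : dD 0 1 = 1 := by decide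
@[simp] lemma dD_02 : dD 0 2 = 2 := by decide
@[simp] lemma dD_03 : dD 0 3 = 3 := by decide
@[simp] lemma dD_04 : dD 0 4 = 2 := by decide
@[simp] lemma dD_05 : dD 0 5 = 1 := by decide
@[simp] lemma dD_10 : dD 1 0 = 1 := by decide
@[simp] lemma dD_11 : dD 1 1 = 0 := by decide
@[simp] lemma dD_12 : dD 1 2 = 1 := by decide
@[simp] lemma dD_13 : dD 1 3 = 2 := by decide
@[simp] lemma dD_14 : dD 1 4 = 1 := by decide
@[simp] lemma dD_15 : dD 1 5 = 2 := by decide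
@[simp] lemma dD_20 : dD 2 0 = 2 := by decide
@[simp] lemma dD_21 : dD 2 1 = 1 := by decide
@[simp] lemma dD_22 : dD 2 2 = 0 := by decide
@[simp] lemma dD_23 : dD 2 3 = 1 := by decide
@[simp] lemma dD_24 : dD 2 4 = 2 := by decide
@[simp] lemma dD_25 : dD 2 5 = 1 := by decide
@[simp] lemma dD_30 : dD 3 0 = 3 := by decide
@[simp] lemma dD_31 : dD 3 1 = 2 := by decide
@[simp] lemma dD_32 : dD 3 2 = 1 := by decide
@[simp] lemma dD_33 : dD 3 3 = 0 := by decide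
@[simp] lemma dD_34 : dD 3 4 = 1 := by decide
@[simp] lemma dD_35 : dD 3 5 = 2 := by decide
@[simp] lemma dD_40 : dD 4 0 = 2 := by decide
@[simp] lemma dD_41 : dD 4 1 = 1 := by decide
@[simp] lemma dD_42 : dD 4 2 = 2 := by decide
@[simp] lemma dD_43 : dD 4 3 = 1 := by decide
@[simp] lemma dD_44 : dD 4 4 = 0 := by decide
@[simp] lemma dD_45 : dD 4 5 = 1 := by decide
@[simp] lemma dD_50 : dD 5 0 = 1 := by decide
@[simp] lemma dD_51 : dD 5 1 = 2 := by decide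
@[simp] lemma dD_52 : dD 5 2 = 1 := by decide
@[simp] lemma dD_53 : dD 5 3 = 2 := by decide
@[simp] lemma dD_54 : dD 5 4 = 1 := by decide
@[simp] lemma dD_55 : dD 5 5 = 0 := by decide

lemma edistD03 : graphD.edist 0 3 = 3 := by
  have fh : ∀ a b : Fin 6, AD a b → ((![0,1,2,3,2,1] : Fin 6 → ℤ) a - ![0,1,2,3,2,1] b).natAbs ≤ 1 := by decide
  refine le_antisymm ?_ ?_
  · have h01 : graphD.Adj 0 1 := (adjD_iff 0 1).mpr (by decide)
    have h12 : graphD.Adj 1 2 := (adjD_iff 1 2).mpr (by decide)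
    have h23 : graphD.Adj 2 3 := (adjD_iff 2 3).mpr (by decide)
    have := graphD.edist_le (SimpleGraph.Walk.cons h01 (SimpleGraph.Walk.cons h12 h23.toWalk))
    simpa using this
  · have := le_edist_of_lip (G := graphD) ![0,1,2,3,2,1]
      (fun a b hab => fh a b ((adjD_iff a b).mp hab)) 0 3
    simpa using this

lemma tableD : ∀ x y, graphD.edist x y = dD x y := by
  intro x y
  fin_cases x <;> fin_cases y <;>
    first
      | exact graphD.edist_self
      | exact edist_eq_one_iff_adj.mpr ((adjD_iff _ _).mpr (by decide))
      | exact edist_eq_two' (by decide) (fun h => by exact absurd ((adjD_iff _ _).mp h) (by decide))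
          (by refine ?_ ; simp only [adjD_iff]; decide)
      | exact edistD03
      | exact (graphD.edist_comm .. ▸ edistD03 : _)

end GraphD

/-- Both chorded 6-cycles have the same spread. -/
theorem spread_graphC_eq_spread_graphD :
    spread graphC =
      2 / (1 + 2 * Real.exp (-1) + 2 * Real.exp (-2) + Real.exp (-3)) +
        4 / (1 + 3 * Real.exp (-1) + 2 * Real.exp (-2)) ∧
    spread graphD =
      2 / (1 + 2 * Real.exp (-1) + 2 * Real.exp (-2) + Real.exp (-3)) +
        4 / (1 + 3 * Real.exp (-1) + 2 * Real.exp (-2)) := by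
  constructor
  · rw [spread]
    simp only [tableC, Fin.sum_univ_six]
    simp only [dC_00, dC_01, dC_02, dC_03, dC_04, dC_05, dC_10, dC_11, dC_12, dC_13, dC_14, dC_15, dC_20, dC_21, dC_22, dC_23, dC_24, dC_25, dC_30, dC_31, dC_32, dC_33, dC_34, dC_35, dC_40, dC_41, dC_42, dC_43, dC_44, dC_45, dC_50, dC_51, dC_52, dC_53, dC_54, dC_55, expNeg0, expNeg1, expNeg2, expNeg3]
    ring
  · rw [spread]
    simp only [tableD, Fin.sum_univ_six]
    simp only [dD_00, dD_01, dD_02, dD_03, dD_04, dD_05, dD_10, dD_11, dD_12, dD_13, dD_14, dD_15, dD_20, dD_21, dD_22, dD_23, dD_24, dD_25, dD_30, dD_31, dD_32, dD_33, dD_34, dD_35, dD_40, dD_41, dD_42, dD_43, dD_44, dD_45, dD_50, dD_51, dD_52, dD_53, dD_54, dD_55, expNeg0, expNeg1, expNeg2, expNeg3]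
    ring
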